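/- Let F be a field, n > 2 an integer, and t_1,…,t_n pairwise distinct elements of F. Then the sum, over all permutations σ of {1,…,n}, of the cyclic product (1/(t_{σ(1)} − t_{σ(2)}))·(1/(t_{σ(2)} − t_{σ(3)}))⋯(1/(t_{σ(n−1)} − t_{σ(n)}))·(1/(t_{σ(n)} − t_{σ(1)})) equals 0. -/

import Mathlib

open Finset Equiv

namespace CyclicAux

variable {F : Type*} [Field F] {n : ℕ} [NeZero n] (t : Fin n → F)

def fac (σ : Perm (Fin n)) (i : Fin n) : F := (t (σ i) - t (σ (i + 1)))⁻¹

def Cc (σ : Perm (Fin n)) : F :=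
  (t (σ (σ⁻¹ 0 - 1)) - t (σ (σ⁻¹ 0 + 1)))⁻¹ *
    ∏ i ∈ univ \ {σ⁻¹ 0 - 1, σ⁻¹ 0}, fac t σ i

def psi (σ : Perm (Fin n)) : F := Cc t σ * (t 0 - t (σ (σ⁻¹ 0 - 1)))⁻¹

def iota (σ : Perm (Fin n)) : Perm (Fin n) := σ * Equiv.swap (σ⁻¹ 0) (σ⁻¹ 0 + 1)

def iota' (σ : Perm (Fin n)) : Perm (Fin n) := σ * Equiv.swap (σ⁻¹ 0 - 1) (σ⁻¹ 0)

lemma iota_inv_zero (σ : Perm (Fin n)) : (iota σ)⁻¹ 0 = σ⁻¹ 0 + 1 := by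
  simp [iota, mul_inv_rev, swap_inv, Equiv.Perm.mul_apply, swap_apply_left]

lemma iota'_inv_zero (σ : Perm (Fin n)) : (iota' σ)⁻¹ 0 = σ⁻¹ 0 - 1 := by
  simp [iota', mul_inv_rev, swap_inv, Equiv.Perm.mul_apply, swap_apply_right]

lemma left_inv (σ : Perm (Fin n)) : iota' (iota σ) = σ := by
  rw [iota', iota_inv_zero, add_sub_cancel_right, iota, mul_assoc, swap_mul_self, mul_one]

lemma right_inv (σ : Perm (Fin n)) : iota (iota' σ) = σ := by
  rw [iota, iota'_inv_zero, sub_add_cancel, iota', mul_assoc, swap_mul_self, mul_one]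

lemma key (hn : 2 < n) (ht : Function.Injective t) (σ : Perm (Fin n)) :
    ∏ i, fac t σ i = psi t (iota σ) - psi t σ := by
  have h10 : (1 : Fin n) ≠ 0 := by
    rw [Fin.ne_iff_vne, Fin.val_one' n, Fin.val_zero, Nat.mod_eq_of_lt (by omega)]; omega
  have h20 : (1 : Fin n) + 1 ≠ 0 := by
    rw [Fin.ne_iff_vne, Fin.val_add, Fin.val_one' n, Fin.val_zero,
      Nat.mod_eq_of_lt (show 1 < n by omega), Nat.mod_eq_of_lt (show 1 + 1 < n by omega)]
    omega
  set p := σ⁻¹ 0 with hp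
  have hσp : σ p = 0 := σ.apply_symm_apply 0
  have hd1 : p - 1 ≠ p := fun h => h10 (sub_eq_self.mp h)
  have hd2 : p + 1 ≠ p := fun h => h10 (by simpa using congrArg (fun x => x - p) h)
  have hd3 : p - 1 ≠ p + 1 := by
    intro h
    apply h20
    have h2 : p + 1 - (p - 1) = 1 + 1 := by abel
    rw [← h, sub_self] at h2
    exact h2.symm
  have hd4 : p + 1 + 1 ≠ p := fun h => h20 (by
    have := congrArg (fun x => x - p) h
    simpa [add_assoc, add_sub_cancel_left] using this)
  have hd5 : p + 1 + 1 ≠ p + 1 := fun h =>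
    h10 (by simpa using congrArg (fun x => x - (p + 1)) h)
  set x := σ (p - 1) with hx
  set y := σ (p + 1) with hy
  set z := σ (p + 1 + 1) with hz
  -- values of iota σ
  have e1 : iota σ (p - 1) = x := by
    rw [iota, Equiv.Perm.mul_apply, ← hp, swap_apply_of_ne_of_ne hd1 hd3]
  have e2 : iota σ p = y := by
    rw [iota, Equiv.Perm.mul_apply, ← hp, swap_apply_left]
  have e4 : iota σ (p + 1 + 1) = z := by
    rw [iota, Equiv.Perm.mul_apply, ← hp, swap_apply_of_ne_of_ne hd4 hd5]
  have hq : (iota σ)⁻¹ 0 = p + 1 := iota_inv_zero σ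
  -- finset decompositions
  have hmem1 : (p+1) ∉ univ \ ({p-1, p, p+1} : Finset (Fin n)) := by simp
  have hmem2 : (p-1) ∉ univ \ ({p-1, p, p+1} : Finset (Fin n)) := by simp
  have hset1 : univ \ ({p-1, p} : Finset (Fin n)) = insert (p+1) (univ \ {p-1, p, p+1}) := by
    ext i
    simp only [mem_sdiff, mem_univ, mem_insert, mem_singleton, true_and, not_or]
    constructor
    · rintro ⟨a, b⟩
      by_cases h : i = p + 1
      · exact Or.inl h
      · exact Or.inr ⟨a, b, h⟩
    · rintro (h | ⟨a, b, c⟩)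
      · exact ⟨h ▸ Ne.symm hd3, h ▸ hd2⟩
      · exact ⟨a, b⟩
  have hset2 : univ \ ({p, p+1} : Finset (Fin n)) = insert (p-1) (univ \ {p-1, p, p+1}) := by
    ext i
    simp only [mem_sdiff, mem_univ, mem_insert, mem_singleton, true_and, not_or]
    constructor
    · rintro ⟨a, b⟩
      by_cases h : i = p - 1
      · exact Or.inl h
      · exact Or.inr ⟨h, a, b⟩
    · rintro (h | ⟨a, b, c⟩)
      · exact ⟨h ▸ hd1, h ▸ hd3⟩
      · exact ⟨b, c⟩
  set R := ∏ i ∈ univ \ ({p-1, p, p+1} : Finset (Fin n)), fac t σ i with hR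
  -- the three special factors for σ
  have hfacpm : fac t σ (p-1) = (t x - t 0)⁻¹ := by rw [fac, sub_add_cancel, hσp]
  have hfacp : fac t σ p = (t 0 - t y)⁻¹ := by rw [fac, hσp]
  have hfacp1 : fac t σ (p+1) = (t y - t z)⁻¹ := rfl
  have hP1 : ∏ i ∈ univ \ ({p-1, p} : Finset (Fin n)), fac t σ i = (t y - t z)⁻¹ * R := by
    rw [hset1, prod_insert hmem1, hfacp1]
  have hsplit : ∏ i, fac t σ i
      = ((t y - t z)⁻¹ * R) * ((t x - t 0)⁻¹ * (t 0 - t y)⁻¹) := by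
    rw [← Finset.prod_sdiff (Finset.subset_univ ({p-1, p} : Finset (Fin n))),
      Finset.prod_pair hd1, hP1, hfacpm, hfacp]
  have hCc : Cc t σ = (t x - t y)⁻¹ * ((t y - t z)⁻¹ * R) := by
    rw [Cc, ← hp, hP1]
  have hCci : Cc t (iota σ) = (t y - t z)⁻¹ * ((t x - t y)⁻¹ * R) := by
    rw [Cc, hq, add_sub_cancel_right, e2, e4]
    congr 1
    rw [hset2, prod_insert hmem2]
    have hf : fac t (iota σ) (p-1) = (t x - t y)⁻¹ := by
      rw [fac, sub_add_cancel, e1, e2]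
    rw [hf]
    congr 1
    apply Finset.prod_congr rfl
    intro i hi
    simp only [mem_sdiff, mem_univ, mem_insert, mem_singleton, true_and, not_or] at hi
    obtain ⟨hi1, hi2, hi3⟩ := hi
    have hj2 : i + 1 ≠ p := fun h => hi1 (eq_sub_of_add_eq h)
    have hj3 : i + 1 ≠ p + 1 := fun h => hi2 (add_right_cancel h)
    rw [fac, fac]
    have g1 : iota σ i = σ i := by
      rw [iota, Equiv.Perm.mul_apply, ← hp, swap_apply_of_ne_of_ne hi2 hi3]
    have g2 : iota σ (i + 1) = σ (i + 1) := by
      rw [iota, Equiv.Perm.mul_apply, ← hp, swap_apply_of_ne_of_ne hj2 hj3]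
    rw [g1, g2]
  have hpsi : psi t σ = ((t x - t y)⁻¹ * ((t y - t z)⁻¹ * R)) * (t 0 - t x)⁻¹ := by
    rw [psi, hCc, ← hp]
  have hpsii : psi t (iota σ)
      = ((t y - t z)⁻¹ * ((t x - t y)⁻¹ * R)) * (t 0 - t y)⁻¹ := by
    rw [psi, hCci, hq, add_sub_cancel_right, e2]
  -- value distinctness
  have hx0 : t x - t 0 ≠ 0 := sub_ne_zero.mpr (ht.ne (by rw [hx, ← hσp]; exact σ.injective.ne hd1))
  have h0y : t 0 - t y ≠ 0 := sub_ne_zero.mpr (ht.ne (by rw [hy, ← hσp]; exact σ.injective.ne (Ne.symm hd2)))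
  have hxy : t x - t y ≠ 0 := sub_ne_zero.mpr (ht.ne (σ.injective.ne hd3))
  have h0x : t 0 - t x ≠ 0 := fun h => hx0 (by
    have := sub_eq_zero.mp h
    rw [this, sub_self])
  rw [hsplit, hpsii, hpsi]
  generalize (t y - t z)⁻¹ = u
  field_simp
  ring

theorem main (hn : 2 < n) (ht : Function.Injective t) :
    ∑ σ : Equiv.Perm (Fin n), ∏ i : Fin n, (t (σ i) - t (σ (i + 1)))⁻¹ = 0 := by
  have : ∑ σ : Equiv.Perm (Fin n), ∏ i : Fin n, (t (σ i) - t (σ (i + 1)))⁻¹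
      = ∑ σ : Equiv.Perm (Fin n), (psi t (iota σ) - psi t σ) := by
    exact Fintype.sum_congr _ _ (fun σ => key t hn ht σ)
  rw [this, Finset.sum_sub_distrib]
  have : ∑ σ : Equiv.Perm (Fin n), psi t (iota σ) = ∑ σ : Equiv.Perm (Fin n), psi t σ :=
    Equiv.sum_comp ⟨iota, iota', left_inv, right_inv⟩ (psi t)
  rw [this, sub_self]

end CyclicAux

/-- For a field `F`, `n > 2`, and pairwise distinct `t 1, …, t n ∈ F`,
the sum over all permutations `σ` of `{1,…,n}` of the cyclic product
`∏ i, 1/(t (σ i) - t (σ (i+1)))` (indices mod `n`) equals `0`. -/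
theorem sum_cyclic_product_eq_zero {F : Type*} [Field F] (n : ℕ) (hn : 2 < n)
    (t : Fin n → F) (ht : Function.Injective t) :
    ∑ σ : Equiv.Perm (Fin n),
      ∏ i : Fin n, (t (σ i) - t (σ (i + ⟨1, by omega⟩)))⁻¹ = 0 := by

  haveI : NeZero n := ⟨by omega⟩
  have e : (⟨1, by omega⟩ : Fin n) = 1 := by
    rw [Fin.ext_iff, Fin.val_one' n, Nat.mod_eq_of_lt (by omega)]
  simp only [e]
  exact CyclicAux.main t hn ht
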